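/- For a uniformly random word w with n occurrences each of 1, 2, 3, the fourth moment of s_1(w) divided by the square of its variance (the kurtosis) equals 3(10n²−n−4)/(5n(2n+1)), which tends to 3 as n → ∞. -/

import Mathlib

/-- Number of pairs of positions i < j with `w i = a` and `w j = b`. -/
def cnt (a b : ℕ) (w : List ℕ) : ℕ :=
  ((Finset.univ : Finset (Fin w.length × Fin w.length)).filter
    (fun p => p.1 < p.2 ∧ w.get p.1 = a ∧ w.get p.2 = b)).card

def s1 (w : List ℕ) : ℤ := (cnt 2 1 w : ℤ) - (cnt 1 2 w : ℤ)
def s2 (w : List ℕ) : ℤ := (cnt 3 2 w : ℤ) - (cnt 2 3 w : ℤ)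
def s3 (w : List ℕ) : ℤ := (cnt 1 3 w : ℤ) - (cnt 3 1 w : ℤ)

/-- The (finite) set of words in {1,2,3} with `a1` ones, `a2` twos and `a3` threes. -/
def W (a1 a2 a3 : ℕ) : Finset (List ℕ) :=
  (List.replicate a1 1 ++ List.replicate a2 2 ++ List.replicate a3 3).permutations.toFinset

/-- Expectation of `g` for a uniformly random word of `W n n n`. -/
noncomputable def E (n : ℕ) (g : List ℕ → ℝ) : ℝ :=
  (∑ w ∈ W n n n, g w) / ((W n n n).card : ℝ)

/-- The k-th central moment of `s1` over `W n n n`. -/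
noncomputable def centralMoment (n : ℕ) (k : ℕ) : ℝ :=
  E n (fun w => ((s1 w : ℝ) - E n (fun v => (s1 v : ℝ))) ^ k)

lemma mem_W_iff {a b c : ℕ} {l : List ℕ} :
    l ∈ W a b c ↔ ∀ x, l.count x =
      (if x = 1 then a else 0) + (if x = 2 then b else 0) + (if x = 3 then c else 0) := by
  rw [W, List.mem_toFinset, List.mem_permutations, List.perm_iff_count]
  simp only [List.count_append, List.count_replicate, beq_iff_eq]
  constructor <;> · intro h x; have := h x; split_ifs at this ⊢ <;> omega

lemma count1_of_mem_W {a b c : ℕ} {l : List ℕ} (h : l ∈ W a b c) : l.count 1 = a := by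
  have := mem_W_iff.1 h 1; simpa using this
lemma count2_of_mem_W {a b c : ℕ} {l : List ℕ} (h : l ∈ W a b c) : l.count 2 = b := by
  have := mem_W_iff.1 h 2; simpa using this
lemma count3_of_mem_W {a b c : ℕ} {l : List ℕ} (h : l ∈ W a b c) : l.count 3 = c := by
  have := mem_W_iff.1 h 3; simpa using this

lemma length_of_mem_W {a b c : ℕ} {l : List ℕ} (h : l ∈ W a b c) : l.length = a + b + c := by
  rw [W, List.mem_toFinset, List.mem_permutations] at h
  have := h.length_eq
  simp at this
  omega

lemma mem_of_mem_W {a b c : ℕ} {l : List ℕ} (h : l ∈ W a b c) {x : ℕ} (hx : x ∈ l) :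
    x = 1 ∨ x = 2 ∨ x = 3 := by
  by_contra hc
  push_neg at hc
  obtain ⟨h1, h2, h3⟩ := hc
  have h0 := mem_W_iff.1 h x
  simp [h1, h2, h3] at h0
  exact (List.count_pos_iff.2 hx).ne' h0

lemma W_filter (a b c x : ℕ) (a' b' c' : ℕ)
    (hx : (x = 1 ∧ a = a' + 1 ∧ b = b' ∧ c = c') ∨ (x = 2 ∧ a = a' ∧ b = b' + 1 ∧ c = c')
        ∨ (x = 3 ∧ a = a' ∧ b = b' ∧ c = c' + 1)) :
    (W a b c).filter (fun l => l.head? = some x)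
      = (W a' b' c').image (fun l => x :: l) := by
  ext l
  simp only [Finset.mem_filter, Finset.mem_image]
  constructor
  · rintro ⟨hl, hh⟩
    cases l with
    | nil => simp at hh
    | cons y t =>
      simp only [List.head?_cons, Option.some.injEq] at hh
      subst hh
      refine ⟨t, ?_, rfl⟩
      rw [mem_W_iff]
      intro z
      have h0 := mem_W_iff.1 hl z
      rw [List.count_cons] at h0
      simp only [beq_iff_eq] at h0
      rcases hx with ⟨rfl,rfl,rfl,rfl⟩|⟨rfl,rfl,rfl,rfl⟩|⟨rfl,rfl,rfl,rfl⟩ <;>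
        · split_ifs at h0 ⊢ <;> omega
  · rintro ⟨t, ht, rfl⟩
    refine ⟨?_, rfl⟩
    rw [mem_W_iff]
    intro z
    have h0 := mem_W_iff.1 ht z
    rw [List.count_cons]
    simp only [beq_iff_eq]
    rcases hx with ⟨rfl,rfl,rfl,rfl⟩|⟨rfl,rfl,rfl,rfl⟩|⟨rfl,rfl,rfl,rfl⟩ <;>
      · split_ifs at h0 ⊢ <;> omega

lemma W_filter_zero (a b c x : ℕ)
    (hx : (x = 1 ∧ a = 0) ∨ (x = 2 ∧ b = 0) ∨ (x = 3 ∧ c = 0)) :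
    (W a b c).filter (fun l => l.head? = some x) = ∅ := by
  rw [Finset.filter_eq_empty_iff]
  rintro l hl hh
  cases l with
  | nil => simp at hh
  | cons y t =>
    simp only [List.head?_cons, Option.some.injEq] at hh
    subst hh
    rcases hx with ⟨rfl, rfl⟩|⟨rfl, rfl⟩|⟨rfl, rfl⟩
    · have h0 := mem_W_iff.1 hl 1; simp [List.count_cons] at h0
    · have h0 := mem_W_iff.1 hl 2; simp [List.count_cons] at h0
    · have h0 := mem_W_iff.1 hl 3; simp [List.count_cons] at h0

lemma head_cases {a b c : ℕ} {l : List ℕ} (h : l ∈ W a b c) (hne : a + b + c ≠ 0) :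
    l.head? = some 1 ∨ l.head? = some 2 ∨ l.head? = some 3 := by
  cases l with
  | nil =>
    have := length_of_mem_W h
    simp at this
    omega
  | cons y t =>
    have hy : y ∈ y :: t := List.mem_cons_self
    rcases mem_of_mem_W h hy with rfl | rfl | rfl <;> simp

lemma sum_rec {M : Type*} [AddCommMonoid M] (f : List ℕ → M) (a b c : ℕ) (h : a + b + c ≠ 0) :
    ∑ w ∈ W a b c, f w
      = (if a = 0 then 0 else ∑ w ∈ W (a-1) b c, f (1 :: w))
      + (if b = 0 then 0 else ∑ w ∈ W a (b-1) c, f (2 :: w))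
      + (if c = 0 then 0 else ∑ w ∈ W a b (c-1), f (3 :: w)) := by
  have E1 : ∑ w ∈ (W a b c).filter (fun l => l.head? = some 1), f w
      = (if a = 0 then 0 else ∑ w ∈ W (a-1) b c, f (1 :: w)) := by
    rcases Nat.eq_zero_or_pos a with ha | ha
    · rw [W_filter_zero a b c 1 (Or.inl ⟨rfl, ha⟩), if_pos ha]
      simp
    · rw [W_filter a b c 1 (a-1) b c (Or.inl ⟨rfl, by omega, rfl, rfl⟩),
        Finset.sum_image (fun u _ v _ huv => by simpa using huv), if_neg (by omega)]
  have E2 : ∑ w ∈ (W a b c).filter (fun l => l.head? = some 2), f w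
      = (if b = 0 then 0 else ∑ w ∈ W a (b-1) c, f (2 :: w)) := by
    rcases Nat.eq_zero_or_pos b with hb | hb
    · rw [W_filter_zero a b c 2 (Or.inr (Or.inl ⟨rfl, hb⟩)), if_pos hb]
      simp
    · rw [W_filter a b c 2 a (b-1) c (Or.inr (Or.inl ⟨rfl, rfl, by omega, rfl⟩)),
        Finset.sum_image (fun u _ v _ huv => by simpa using huv), if_neg (by omega)]
  have E3 : ∑ w ∈ (W a b c).filter (fun l => l.head? = some 3), f w
      = (if c = 0 then 0 else ∑ w ∈ W a b (c-1), f (3 :: w)) := by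
    rcases Nat.eq_zero_or_pos c with hc | hc
    · rw [W_filter_zero a b c 3 (Or.inr (Or.inr ⟨rfl, hc⟩)), if_pos hc]
      simp
    · rw [W_filter a b c 3 a b (c-1) (Or.inr (Or.inr ⟨rfl, rfl, rfl, by omega⟩)),
        Finset.sum_image (fun u _ v _ huv => by simpa using huv), if_neg (by omega)]
  rw [← E1, ← E2, ← E3, add_assoc]
  rw [← Finset.sum_filter_add_sum_filter_not (W a b c) (fun l => l.head? = some 1) f]
  congr 1
  rw [← Finset.sum_filter_add_sum_filter_not
    ((W a b c).filter (fun l => ¬ l.head? = some 1)) (fun l => l.head? = some 2) f]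
  rw [Finset.filter_filter, Finset.filter_filter]
  have e2 : (W a b c).filter (fun l => ¬l.head? = some 1 ∧ l.head? = some 2)
      = (W a b c).filter (fun l => l.head? = some 2) := by
    apply Finset.filter_congr
    intro l _
    constructor
    · rintro ⟨_, h2⟩; exact h2
    · intro h2; exact ⟨by simp [h2], h2⟩
  have e3 : (W a b c).filter (fun l => ¬l.head? = some 1 ∧ ¬l.head? = some 2)
      = (W a b c).filter (fun l => l.head? = some 3) := by
    apply Finset.filter_congr
    intro l hl
    rcases head_cases hl h with hh | hh | hh <;> simp [hh]
  rw [e2, e3]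

lemma count_eq_sum' (u : ℕ) (w : List ℕ) :
    (w.count u : ℕ) = ∑ j : Fin w.length, if w.get j = u then 1 else 0 := by
  induction w with
  | nil => simp
  | cons x t ih =>
    simp only [List.length_cons]
    rw [Fin.sum_univ_succ]
    simp only [List.get_eq_getElem, Fin.val_zero, Fin.val_succ, List.getElem_cons_zero,
      List.getElem_cons_succ, List.count_cons]
    simp only [List.get_eq_getElem] at ih
    rw [← ih]
    by_cases h : x = u <;> simp [h, Nat.add_comm]

lemma cnt_cons (t u x : ℕ) (w : List ℕ) :
    cnt t u (x :: w) = cnt t u w + if x = t then w.count u else 0 := by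
  unfold cnt
  rw [Finset.card_filter, Finset.card_filter, Fintype.sum_prod_type, Fintype.sum_prod_type]
  simp only [List.length_cons]
  rw [Fin.sum_univ_succ]
  simp only [List.get_eq_getElem, Fin.val_zero, Fin.val_succ, List.getElem_cons_zero,
    List.getElem_cons_succ]
  have h0 : (∑ y : Fin (w.length+1), if (0 : Fin (w.length+1)) < y ∧ x = t ∧ (x :: w)[(y:ℕ)] = u then 1 else 0)
      = if x = t then w.count u else 0 := by
    rw [Fin.sum_univ_succ]
    simp only [Fin.val_zero, Fin.val_succ, List.getElem_cons_zero, List.getElem_cons_succ]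
    by_cases h : x = t
    · simp only [h, true_and, lt_self_iff_false, false_and, if_false, if_true, zero_add]
      rw [count_eq_sum']
      simp only [List.get_eq_getElem]
      congr 1; ext j; congr 1
      simp [Fin.succ_pos]
    · simp [h]
  erw [h0]
  have h1 : ∀ i : Fin w.length,
      (∑ y : Fin (w.length+1), if (Fin.succ i) < y ∧ w[(i:ℕ)] = t ∧ (x :: w)[(y:ℕ)] = u then 1 else 0)
      = ∑ y : Fin w.length, if i < y ∧ w[(i:ℕ)] = t ∧ w[(y:ℕ)] = u then 1 else 0 := by
    intro i
    rw [Fin.sum_univ_succ]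
    simp only [Fin.val_zero, Fin.val_succ, List.getElem_cons_zero, List.getElem_cons_succ]
    have hn : ¬ ((Fin.succ i) < (0 : Fin (w.length+1))) := by simp
    simp only [hn, false_and, if_false, zero_add, Fin.succ_lt_succ_iff]
  simp only [h1]
  ring

lemma s1_cons1 (w : List ℕ) : s1 (1 :: w) = s1 w - w.count 2 := by
  unfold s1
  rw [cnt_cons, cnt_cons]
  push_cast
  norm_num
  ring

lemma s1_cons2 (w : List ℕ) : s1 (2 :: w) = s1 w + w.count 1 := by
  unfold s1
  rw [cnt_cons, cnt_cons]
  push_cast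
  norm_num
  ring

lemma s1_cons3 (w : List ℕ) : s1 (3 :: w) = s1 w := by
  unfold s1
  rw [cnt_cons, cnt_cons]
  norm_num

lemma cnt_eq_zero_right {u w} (h : u ∉ w) (t : ℕ) : cnt t u w = 0 := by
  unfold cnt
  rw [Finset.card_eq_zero, Finset.filter_eq_empty_iff]
  rintro p - ⟨-, -, hg⟩
  have hm : w.get p.2 ∈ w := by
    have := List.get_mem w p.2
    simpa using this
  exact h (hg ▸ hm)

lemma s1_zero_left {w : List ℕ} (h : (1:ℕ) ∉ w) : s1 w = 0 := by
  unfold s1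
  rw [cnt_eq_zero_right h 2]
  have : cnt 1 2 w = 0 := by
    unfold cnt
    rw [Finset.card_eq_zero, Finset.filter_eq_empty_iff]
    rintro p - ⟨-, hg, -⟩
    have hm : w.get p.1 ∈ w := by
      have := List.get_mem w p.1
      simpa using this
    exact h (hg ▸ hm)
  rw [this]; simp

lemma s1_zero_two {w : List ℕ} (h : (2:ℕ) ∉ w) : s1 w = 0 := by
  unfold s1
  rw [cnt_eq_zero_right h 1]
  have : cnt 2 1 w = 0 := by
    unfold cnt
    rw [Finset.card_eq_zero, Finset.filter_eq_empty_iff]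
    rintro p - ⟨-, hg, -⟩
    have hm : w.get p.1 ∈ w := by
      have := List.get_mem w p.1
      simpa using this
    exact h (hg ▸ hm)
  rw [this]; simp

lemma not_mem_one_W {b c : ℕ} {w : List ℕ} (h : w ∈ W 0 b c) : (1:ℕ) ∉ w := by
  rw [← List.count_eq_zero]
  exact count1_of_mem_W h

lemma not_mem_two_W {a c : ℕ} {w : List ℕ} (h : w ∈ W a 0 c) : (2:ℕ) ∉ w := by
  rw [← List.count_eq_zero]
  exact count2_of_mem_W h

lemma card_W_mul : ∀ N a b c, a + b + c = N →
    (W a b c).card * (a.factorial * b.factorial * c.factorial) = N.factorial := by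
  intro N
  induction N using Nat.strong_induction_on with
  | _ N ih =>
    intro a b c hN
    rcases Nat.eq_zero_or_pos N with h0 | hpos
    · subst h0
      obtain ⟨rfl, rfl, rfl⟩ : a = 0 ∧ b = 0 ∧ c = 0 := by omega
      have : W 0 0 0 = {[]} := by
        ext l
        rw [mem_W_iff]
        simp only [Finset.mem_singleton]
        constructor
        · intro h
          cases l with
          | nil => rfl
          | cons y t =>
            have h2 := h y
            simp only [List.count_cons, beq_iff_eq] at h2
            split_ifs at h2 <;> omega
        · rintro rfl x; simp
      simp [this]
    · have hcard : (W a b c).card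
          = (if a = 0 then 0 else (W (a-1) b c).card)
          + (if b = 0 then 0 else (W a (b-1) c).card)
          + (if c = 0 then 0 else (W a b (c-1)).card) := by
        have := sum_rec (fun _ => (1:ℕ)) a b c (by omega)
        simpa using this
      have t1 : (if a = 0 then 0 else (W (a-1) b c).card) * (a.factorial * b.factorial * c.factorial)
          = a * (N-1).factorial := by
        rcases Nat.eq_zero_or_pos a with ha | ha
        · simp [ha]
        · rw [if_neg (by omega)]
          have := ih (N-1) (by omega) (a-1) b c (by omega)
          calc (W (a-1) b c).card * (a.factorial * b.factorial * c.factorial)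
              = a * ((W (a-1) b c).card * ((a-1).factorial * b.factorial * c.factorial)) := by
                rw [show a.factorial = a * (a-1).factorial by
                  rw [← Nat.succ_pred_eq_of_pos ha, Nat.factorial_succ]; simp]
                ring
            _ = a * (N-1).factorial := by rw [this]
      have t2 : (if b = 0 then 0 else (W a (b-1) c).card) * (a.factorial * b.factorial * c.factorial)
          = b * (N-1).factorial := by
        rcases Nat.eq_zero_or_pos b with hb | hb
        · simp [hb]
        · rw [if_neg (by omega)]
          have := ih (N-1) (by omega) a (b-1) c (by omega)
          calc (W a (b-1) c).card * (a.factorial * b.factorial * c.factorial)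
              = b * ((W a (b-1) c).card * (a.factorial * (b-1).factorial * c.factorial)) := by
                rw [show b.factorial = b * (b-1).factorial by
                  rw [← Nat.succ_pred_eq_of_pos hb, Nat.factorial_succ]; simp]
                ring
            _ = b * (N-1).factorial := by rw [this]
      have t3 : (if c = 0 then 0 else (W a b (c-1)).card) * (a.factorial * b.factorial * c.factorial)
          = c * (N-1).factorial := by
        rcases Nat.eq_zero_or_pos c with hc | hc
        · simp [hc]
        · rw [if_neg (by omega)]
          have := ih (N-1) (by omega) a b (c-1) (by omega)
          calc (W a b (c-1)).card * (a.factorial * b.factorial * c.factorial)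
              = c * ((W a b (c-1)).card * (a.factorial * b.factorial * (c-1).factorial)) := by
                rw [show c.factorial = c * (c-1).factorial by
                  rw [← Nat.succ_pred_eq_of_pos hc, Nat.factorial_succ]; simp]
                ring
            _ = c * (N-1).factorial := by rw [this]
      rw [hcard, Nat.add_mul, Nat.add_mul, t1, t2, t3,
        ← Nat.add_mul, ← Nat.add_mul, hN]
      rw [← Nat.succ_pred_eq_of_pos hpos, Nat.factorial_succ]
      simp

lemma card_W_pos (a b c : ℕ) : 0 < (W a b c).card := by
  have h := card_W_mul (a+b+c) a b c rfl
  rcases Nat.eq_zero_or_pos (W a b c).card with h0 | h0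
  · rw [h0] at h
    simp at h
    exact absurd h.symm (Nat.factorial_pos _).ne'
  · exact h0

lemma card_rel (a b c : ℕ) :
    (b+1) * (W a (b+1) c).card = (a+1) * (W (a+1) b c).card := by
  have h1 := card_W_mul (a+(b+1)+c) a (b+1) c rfl
  have h2 := card_W_mul ((a+1)+b+c) (a+1) b c rfl
  have hD : 0 < a.factorial * (b+1).factorial * c.factorial * (a+1) :=
    Nat.mul_pos (Nat.mul_pos (Nat.mul_pos (Nat.factorial_pos _) (Nat.factorial_pos _))
      (Nat.factorial_pos _)) (Nat.succ_pos a)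
  apply Nat.eq_of_mul_eq_mul_right hD
  calc (b+1) * (W a (b+1) c).card * (a.factorial * (b+1).factorial * c.factorial * (a+1))
      = ((b+1) * (a+1)) * ((W a (b+1) c).card * (a.factorial * (b+1).factorial * c.factorial)) := by
        ring
    _ = ((b+1) * (a+1)) * (a+(b+1)+c).factorial := by rw [h1]
    _ = ((b+1) * (a+1)) * ((a+1)+b+c).factorial := by ring_nf
    _ = ((b+1) * (a+1)) * ((W (a+1) b c).card * ((a+1).factorial * b.factorial * c.factorial)) := by
        rw [h2]
    _ = (a+1) * (W (a+1) b c).card * (a.factorial * (b+1).factorial * c.factorial * (a+1)) := by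
        rw [Nat.factorial_succ (a), Nat.factorial_succ (b)]
        ring

-- expansion helpers over ℤ
lemma sum_shift1 {α : Type*} (s : Finset α) (f : α → ℤ) (t : ℤ) :
    ∑ x ∈ s, (f x + t) = (∑ x ∈ s, f x) + s.card * t := by
  rw [Finset.sum_add_distrib]
  simp [mul_comm]

lemma sum_shift2 {α : Type*} (s : Finset α) (f : α → ℤ) (t : ℤ) :
    ∑ x ∈ s, (f x + t)^2
      = (∑ x ∈ s, (f x)^2) + 2*t*(∑ x ∈ s, f x) + s.card * t^2 := by
  induction s using Finset.cons_induction with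
  | empty => simp
  | cons x s hx ih =>
    rw [Finset.sum_cons, Finset.sum_cons, Finset.sum_cons, Finset.card_cons, ih]
    push_cast
    ring

lemma sum_shift3 {α : Type*} (s : Finset α) (f : α → ℤ) (t : ℤ) :
    ∑ x ∈ s, (f x + t)^3
      = (∑ x ∈ s, (f x)^3) + 3*t*(∑ x ∈ s, (f x)^2) + 3*t^2*(∑ x ∈ s, f x) + s.card * t^3 := by
  induction s using Finset.cons_induction with
  | empty => simp
  | cons x s hx ih =>
    rw [Finset.sum_cons, Finset.sum_cons, Finset.sum_cons, Finset.sum_cons, Finset.card_cons, ih]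
    push_cast
    ring

lemma sum_shift4 {α : Type*} (s : Finset α) (f : α → ℤ) (t : ℤ) :
    ∑ x ∈ s, (f x + t)^4
      = (∑ x ∈ s, (f x)^4) + 4*t*(∑ x ∈ s, (f x)^3) + 6*t^2*(∑ x ∈ s, (f x)^2)
        + 4*t^3*(∑ x ∈ s, f x) + s.card * t^4 := by
  induction s using Finset.cons_induction with
  | empty => simp
  | cons x s hx ih =>
    rw [Finset.sum_cons, Finset.sum_cons, Finset.sum_cons, Finset.sum_cons, Finset.sum_cons,
      Finset.card_cons, ih]
    push_cast
    ring

lemma S1_zero : ∀ N a b c, a + b + c = N → ∑ w ∈ W a b c, s1 w = 0 := by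
  intro N
  induction N using Nat.strong_induction_on with
  | _ N ih =>
    rintro (_ | a1) b c hN
    · exact Finset.sum_eq_zero (fun w hw => s1_zero_left (not_mem_one_W hw))
    rcases b with _ | b1
    · exact Finset.sum_eq_zero (fun w hw => s1_zero_two (not_mem_two_W hw))
    have hrec := sum_rec (fun w => s1 w) (a1+1) (b1+1) c (by omega)
    simp only [Nat.succ_ne_zero, if_false, Nat.add_sub_cancel] at hrec
    have e1 : ∑ w ∈ W a1 (b1+1) c, s1 (1 :: w)
        = ∑ w ∈ W a1 (b1+1) c, (s1 w + (-((b1:ℤ)+1))) := by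
      refine Finset.sum_congr rfl (fun w hw => ?_)
      rw [s1_cons1, count2_of_mem_W hw]
      push_cast
      ring
    have e2 : ∑ w ∈ W (a1+1) b1 c, s1 (2 :: w)
        = ∑ w ∈ W (a1+1) b1 c, (s1 w + ((a1:ℤ)+1)) := by
      refine Finset.sum_congr rfl (fun w hw => ?_)
      rw [s1_cons2, count1_of_mem_W hw]
      push_cast
      ring
    have e3 : (if c = 0 then (0:ℤ) else ∑ w ∈ W (a1+1) (b1+1) (c-1), s1 (3 :: w)) = 0 := by
      split_ifs with hc
      · rfl
      · rw [Finset.sum_congr rfl (fun w _ => s1_cons3 w)]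
        exact ih (N-1) (by omega) _ _ _ (by omega)
    rw [hrec, e1, e2, e3, sum_shift1, sum_shift1,
      ih (N-1) (by omega) a1 (b1+1) c (by omega),
      ih (N-1) (by omega) (a1+1) b1 c (by omega)]
    have hrel : ((b1:ℤ)+1) * ((W a1 (b1+1) c).card : ℤ)
        = ((a1:ℤ)+1) * ((W (a1+1) b1 c).card : ℤ) := by
      exact_mod_cast card_rel a1 b1 c
    linear_combination - hrel

lemma S2_eq : ∀ N a b c, a + b + c = N →
    3 * ∑ w ∈ W a b c, (s1 w)^2
      = ((W a b c).card : ℤ) * ((a:ℤ) * (b:ℤ) * ((a:ℤ) + (b:ℤ) + 1)) := by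
  intro N
  induction N using Nat.strong_induction_on with
  | _ N ih =>
    rintro (_ | a1) b c hN
    · rw [Finset.sum_eq_zero (fun w hw => by
        rw [s1_zero_left (not_mem_one_W hw)]; ring)]
      push_cast
      ring
    rcases b with _ | b1
    · rw [Finset.sum_eq_zero (fun w hw => by
        rw [s1_zero_two (not_mem_two_W hw)]; ring)]
      push_cast
      ring
    have hS1a := S1_zero (N-1) a1 (b1+1) c (by omega)
    have hS1b := S1_zero (N-1) (a1+1) b1 c (by omega)
    have hrec := sum_rec (fun w => (s1 w)^2) (a1+1) (b1+1) c (by omega)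
    simp only [Nat.succ_ne_zero, if_false, Nat.add_sub_cancel] at hrec
    have hc1 : ∑ w ∈ W a1 (b1+1) c, (s1 (1 :: w))^2
        = ∑ w ∈ W a1 (b1+1) c, (s1 w + (-((b1:ℤ)+1)))^2 :=
      Finset.sum_congr rfl (fun w hw => by
        rw [s1_cons1, count2_of_mem_W hw]; push_cast; ring)
    have hc2 : ∑ w ∈ W (a1+1) b1 c, (s1 (2 :: w))^2
        = ∑ w ∈ W (a1+1) b1 c, (s1 w + ((a1:ℤ)+1))^2 :=
      Finset.sum_congr rfl (fun w hw => by
        rw [s1_cons2, count1_of_mem_W hw]; push_cast; ring)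
    have E1 : 3 * ∑ w ∈ W a1 (b1+1) c, (s1 (1 :: w))^2
        = ((W a1 (b1+1) c).card : ℤ) * ((a1:ℤ) * ((b1:ℤ)+1) * ((a1:ℤ) + ((b1:ℤ)+1) + 1))
          + 3 * ((W a1 (b1+1) c).card : ℤ) * ((b1:ℤ)+1)^2 := by
      rw [hc1, sum_shift2, hS1a]
      have ihB := ih (N-1) (by omega) a1 (b1+1) c (by omega)
      push_cast at ihB ⊢
      linear_combination ihB
    have E2 : 3 * ∑ w ∈ W (a1+1) b1 c, (s1 (2 :: w))^2
        = ((W (a1+1) b1 c).card : ℤ) * (((a1:ℤ)+1) * (b1:ℤ) * (((a1:ℤ)+1) + (b1:ℤ) + 1))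
          + 3 * ((W (a1+1) b1 c).card : ℤ) * ((a1:ℤ)+1)^2 := by
      rw [hc2, sum_shift2, hS1b]
      have ihB := ih (N-1) (by omega) (a1+1) b1 c (by omega)
      push_cast at ihB ⊢
      linear_combination ihB
    have E3 : 3 * (if c = 0 then (0:ℤ) else ∑ w ∈ W (a1+1) (b1+1) (c-1), (s1 (3 :: w))^2)
        = (if c = 0 then (0:ℤ) else ((W (a1+1) (b1+1) (c-1)).card : ℤ))
            * (((a1:ℤ)+1) * ((b1:ℤ)+1) * (((a1:ℤ)+1) + ((b1:ℤ)+1) + 1)) := by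
      split_ifs with hc
      · ring
      · rw [Finset.sum_congr rfl (fun w _ => by rw [s1_cons3])]
        have ihB := ih (N-1) (by omega) (a1+1) (b1+1) (c-1) (by omega)
        push_cast at ihB ⊢
        linear_combination ihB
    have hcard : (((W (a1+1) (b1+1) c).card : ℤ))
        = ((W a1 (b1+1) c).card : ℤ) + ((W (a1+1) b1 c).card : ℤ)
          + (if c = 0 then (0:ℤ) else ((W (a1+1) (b1+1) (c-1)).card : ℤ)) := by
      have := sum_rec (fun _ => (1:ℤ)) (a1+1) (b1+1) c (by omega)
      simp only [Nat.succ_ne_zero, if_false, Nat.add_sub_cancel, Finset.sum_const,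
        nsmul_eq_mul, mul_one] at this
      exact this
    have hrel : ((b1:ℤ)+1) * ((W a1 (b1+1) c).card : ℤ)
        = ((a1:ℤ)+1) * ((W (a1+1) b1 c).card : ℤ) := by
      exact_mod_cast card_rel a1 b1 c
    rw [hrec]
    push_cast
    linear_combination E1 + E2 + E3
      - (((a1:ℤ)+1) * ((b1:ℤ)+1) * (((a1:ℤ)+1) + ((b1:ℤ)+1) + 1)) * hcard
      + (2*(((b1:ℤ)+1) - ((a1:ℤ)+1))) * hrel

lemma S3_zero : ∀ N a b c, a + b + c = N → ∑ w ∈ W a b c, (s1 w)^3 = 0 := by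
  intro N
  induction N using Nat.strong_induction_on with
  | _ N ih =>
    rintro (_ | a1) b c hN
    · exact Finset.sum_eq_zero (fun w hw => by rw [s1_zero_left (not_mem_one_W hw)]; ring)
    rcases b with _ | b1
    · exact Finset.sum_eq_zero (fun w hw => by rw [s1_zero_two (not_mem_two_W hw)]; ring)
    have hS1a := S1_zero (a1+(b1+1)+c) a1 (b1+1) c rfl
    have hS1b := S1_zero ((a1+1)+b1+c) (a1+1) b1 c rfl
    have hS2a := S2_eq (a1+(b1+1)+c) a1 (b1+1) c rfl
    have hS2b := S2_eq ((a1+1)+b1+c) (a1+1) b1 c rfl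
    have hrec := sum_rec (fun w => (s1 w)^3) (a1+1) (b1+1) c (by omega)
    simp only [Nat.succ_ne_zero, if_false, Nat.add_sub_cancel] at hrec
    have hc1 : ∑ w ∈ W a1 (b1+1) c, (s1 (1 :: w))^3
        = ∑ w ∈ W a1 (b1+1) c, (s1 w + (-((b1:ℤ)+1)))^3 :=
      Finset.sum_congr rfl (fun w hw => by
        rw [s1_cons1, count2_of_mem_W hw]; push_cast; ring)
    have hc2 : ∑ w ∈ W (a1+1) b1 c, (s1 (2 :: w))^3
        = ∑ w ∈ W (a1+1) b1 c, (s1 w + ((a1:ℤ)+1))^3 :=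
      Finset.sum_congr rfl (fun w hw => by
        rw [s1_cons2, count1_of_mem_W hw]; push_cast; ring)
    have E1 : 3 * ∑ w ∈ W a1 (b1+1) c, (s1 (1 :: w))^3
        = -3*((b1:ℤ)+1) * (((W a1 (b1+1) c).card : ℤ) * ((a1:ℤ) * ((b1:ℤ)+1) * ((a1:ℤ) + ((b1:ℤ)+1) + 1)))
          - 3*((W a1 (b1+1) c).card : ℤ)*((b1:ℤ)+1)^3 := by
      rw [hc1, sum_shift3, hS1a, ih (N-1) (by omega) a1 (b1+1) c (by omega)]
      push_cast at hS2a ⊢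
      linear_combination (-3*((b1:ℤ)+1)) * hS2a
    have E2 : 3 * ∑ w ∈ W (a1+1) b1 c, (s1 (2 :: w))^3
        = 3*((a1:ℤ)+1) * (((W (a1+1) b1 c).card : ℤ) * (((a1:ℤ)+1) * (b1:ℤ) * (((a1:ℤ)+1) + (b1:ℤ) + 1)))
          + 3*((W (a1+1) b1 c).card : ℤ)*((a1:ℤ)+1)^3 := by
      rw [hc2, sum_shift3, hS1b, ih (N-1) (by omega) (a1+1) b1 c (by omega)]
      push_cast at hS2b ⊢
      linear_combination (3*((a1:ℤ)+1)) * hS2b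
    have E3 : (if c = 0 then (0:ℤ) else ∑ w ∈ W (a1+1) (b1+1) (c-1), (s1 (3 :: w))^3) = 0 := by
      split_ifs with hc
      · rfl
      · rw [Finset.sum_congr rfl (fun w _ => by rw [s1_cons3])]
        exact ih (N-1) (by omega) _ _ _ (by omega)
    have hrel : ((b1:ℤ)+1) * ((W a1 (b1+1) c).card : ℤ)
        = ((a1:ℤ)+1) * ((W (a1+1) b1 c).card : ℤ) := by
      exact_mod_cast card_rel a1 b1 c
    have key : 3 * ∑ w ∈ W (a1+1) (b1+1) c, (s1 w)^3 = 0 := by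
      rw [hrec]
      have hA : (0:ℤ) = 0 := rfl
      set A := (a1:ℤ)+1
      set B := (b1:ℤ)+1
      linear_combination E1 + E2 + 3*E3 + (3*(A*B - A*B^2 - A^2*B)) * hrel
    linarith

noncomputable def Q4 (A B : ℤ) : ℤ :=
  -2*A*B^2 - 4*A*B^3 - 2*A*B^4 - 2*A^2*B - A^2*B^2 + 6*A^2*B^3 + 5*A^2*B^4
    - 4*A^3*B + 6*A^3*B^2 + 10*A^3*B^3 - 2*A^4*B + 5*A^4*B^2

lemma S4_eq : ∀ N a b c, a + b + c = N →
    15 * ∑ w ∈ W a b c, (s1 w)^4 = ((W a b c).card : ℤ) * Q4 (a:ℤ) (b:ℤ) := by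
  intro N
  induction N using Nat.strong_induction_on with
  | _ N ih =>
    rintro (_ | a1) b c hN
    · rw [Finset.sum_eq_zero (fun w hw => by
        rw [s1_zero_left (not_mem_one_W hw)]; ring)]
      unfold Q4
      push_cast
      ring
    rcases b with _ | b1
    · rw [Finset.sum_eq_zero (fun w hw => by
        rw [s1_zero_two (not_mem_two_W hw)]; ring)]
      unfold Q4
      push_cast
      ring
    have hS1a := S1_zero (a1+(b1+1)+c) a1 (b1+1) c rfl
    have hS1b := S1_zero ((a1+1)+b1+c) (a1+1) b1 c rfl
    have hS2a := S2_eq (a1+(b1+1)+c) a1 (b1+1) c rfl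
    have hS2b := S2_eq ((a1+1)+b1+c) (a1+1) b1 c rfl
    have hS3a := S3_zero (a1+(b1+1)+c) a1 (b1+1) c rfl
    have hS3b := S3_zero ((a1+1)+b1+c) (a1+1) b1 c rfl
    have hrec := sum_rec (fun w => (s1 w)^4) (a1+1) (b1+1) c (by omega)
    simp only [Nat.succ_ne_zero, if_false, Nat.add_sub_cancel] at hrec
    have hc1 : ∑ w ∈ W a1 (b1+1) c, (s1 (1 :: w))^4
        = ∑ w ∈ W a1 (b1+1) c, (s1 w + (-((b1:ℤ)+1)))^4 :=
      Finset.sum_congr rfl (fun w hw => by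
        rw [s1_cons1, count2_of_mem_W hw]; push_cast; ring)
    have hc2 : ∑ w ∈ W (a1+1) b1 c, (s1 (2 :: w))^4
        = ∑ w ∈ W (a1+1) b1 c, (s1 w + ((a1:ℤ)+1))^4 :=
      Finset.sum_congr rfl (fun w hw => by
        rw [s1_cons2, count1_of_mem_W hw]; push_cast; ring)
    have E1 : 15 * ∑ w ∈ W a1 (b1+1) c, (s1 (1 :: w))^4
        = ((W a1 (b1+1) c).card : ℤ) * Q4 (a1:ℤ) ((b1:ℤ)+1)
          + 30*((b1:ℤ)+1)^2 * (((W a1 (b1+1) c).card : ℤ) * ((a1:ℤ) * ((b1:ℤ)+1) * ((a1:ℤ) + ((b1:ℤ)+1) + 1)))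
          + 15*((W a1 (b1+1) c).card : ℤ)*((b1:ℤ)+1)^4 := by
      rw [hc1, sum_shift4, hS1a, hS3a]
      have ihB := ih (N-1) (by omega) a1 (b1+1) c (by omega)
      unfold Q4 at ihB ⊢
      push_cast at ihB hS2a ⊢
      linear_combination ihB + (30*((b1:ℤ)+1)^2) * hS2a
    have E2 : 15 * ∑ w ∈ W (a1+1) b1 c, (s1 (2 :: w))^4
        = ((W (a1+1) b1 c).card : ℤ) * Q4 ((a1:ℤ)+1) (b1:ℤ)
          + 30*((a1:ℤ)+1)^2 * (((W (a1+1) b1 c).card : ℤ) * (((a1:ℤ)+1) * (b1:ℤ) * (((a1:ℤ)+1) + (b1:ℤ) + 1)))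
          + 15*((W (a1+1) b1 c).card : ℤ)*((a1:ℤ)+1)^4 := by
      rw [hc2, sum_shift4, hS1b, hS3b]
      have ihB := ih (N-1) (by omega) (a1+1) b1 c (by omega)
      unfold Q4 at ihB ⊢
      push_cast at ihB hS2b ⊢
      linear_combination ihB + (30*((a1:ℤ)+1)^2) * hS2b
    have E3 : 15 * (if c = 0 then (0:ℤ) else ∑ w ∈ W (a1+1) (b1+1) (c-1), (s1 (3 :: w))^4)
        = (if c = 0 then (0:ℤ) else ((W (a1+1) (b1+1) (c-1)).card : ℤ))
            * Q4 ((a1:ℤ)+1) ((b1:ℤ)+1) := by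
      split_ifs with hc
      · ring
      · rw [Finset.sum_congr rfl (fun w _ => by rw [s1_cons3])]
        have ihB := ih (N-1) (by omega) (a1+1) (b1+1) (c-1) (by omega)
        push_cast at ihB ⊢
        linear_combination ihB
    have hcard : (((W (a1+1) (b1+1) c).card : ℤ))
        = ((W a1 (b1+1) c).card : ℤ) + ((W (a1+1) b1 c).card : ℤ)
          + (if c = 0 then (0:ℤ) else ((W (a1+1) (b1+1) (c-1)).card : ℤ)) := by
      have := sum_rec (fun _ => (1:ℤ)) (a1+1) (b1+1) c (by omega)
      simp only [Nat.succ_ne_zero, if_false, Nat.add_sub_cancel, Finset.sum_const,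
        nsmul_eq_mul, mul_one] at this
      exact this
    have hrel : ((b1:ℤ)+1) * ((W a1 (b1+1) c).card : ℤ)
        = ((a1:ℤ)+1) * ((W (a1+1) b1 c).card : ℤ) := by
      exact_mod_cast card_rel a1 b1 c
    rw [hrec]
    unfold Q4 at E1 E2 E3 ⊢
    push_cast
    set A := (a1:ℤ)+1 with hA
    set B := (b1:ℤ)+1 with hB
    linear_combination E1 + E2 + E3
      - (-2*A*B^2 - 4*A*B^3 - 2*A*B^4 - 2*A^2*B - A^2*B^2 + 6*A^2*B^3 + 5*A^2*B^4
          - 4*A^3*B + 6*A^3*B^2 + 10*A^3*B^3 - 2*A^4*B + 5*A^4*B^2) * hcard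
      + (-8*B^3 - 12*A*B^2 + 20*A*B^3 + 12*A^2*B + 8*A^3 - 20*A^3*B) * hrel

theorem kurtosis_s1 (n : ℕ) (hn : 1 ≤ n) :
    centralMoment n 4 / (centralMoment n 2) ^ 2 =
      3 * (10 * (n : ℝ) ^ 2 - n - 4) / (5 * n * (2 * n + 1)) ∧
    Filter.Tendsto
      (fun m : ℕ => 3 * (10 * (m : ℝ) ^ 2 - m - 4) / (5 * m * (2 * m + 1)))
      Filter.atTop (nhds 3) := by
  constructor
  · have hcard0 : ((W n n n).card : ℝ) ≠ 0 :=
      Nat.cast_ne_zero.2 (card_W_pos n n n).ne'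
    have hn0 : (n:ℝ) ≠ 0 := Nat.cast_ne_zero.2 (by omega)
    have hE1 : E n (fun v => (s1 v : ℝ)) = 0 := by
      unfold E
      have hs : (∑ w ∈ W n n n, ((s1 w : ℝ))) = ((∑ w ∈ W n n n, s1 w : ℤ) : ℝ) := by
        push_cast
        rfl
      rw [hs, S1_zero (n+n+n) n n n rfl]
      simp
    have h2 : centralMoment n 2 = ((n:ℝ)^2*(2*(n:ℝ)+1))/3 := by
      unfold centralMoment
      rw [hE1]
      simp only [sub_zero]
      unfold E
      have hs : (∑ w ∈ W n n n, ((s1 w : ℝ))^2) = ((∑ w ∈ W n n n, (s1 w)^2 : ℤ) : ℝ) := by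
        push_cast
        rfl
      rw [hs]
      have hR : (3:ℝ) * ((∑ w ∈ W n n n, (s1 w)^2 : ℤ) : ℝ)
          = ((W n n n).card : ℝ) * ((n:ℝ) * (n:ℝ) * ((n:ℝ) + (n:ℝ) + 1)) := by
        exact_mod_cast S2_eq (n+n+n) n n n rfl
      rw [div_eq_div_iff hcard0 (by norm_num : (3:ℝ) ≠ 0)]
      linear_combination hR
    have h4 : centralMoment n 4 = ((Q4 (n:ℤ) (n:ℤ) : ℤ) : ℝ)/15 := by
      unfold centralMoment
      rw [hE1]
      simp only [sub_zero]
      unfold E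
      have hs : (∑ w ∈ W n n n, ((s1 w : ℝ))^4) = ((∑ w ∈ W n n n, (s1 w)^4 : ℤ) : ℝ) := by
        push_cast
        rfl
      rw [hs]
      have hR : (15:ℝ) * ((∑ w ∈ W n n n, (s1 w)^4 : ℤ) : ℝ)
          = ((W n n n).card : ℝ) * ((Q4 (n:ℤ) (n:ℤ) : ℤ) : ℝ) := by
        exact_mod_cast S4_eq (n+n+n) n n n rfl
      rw [div_eq_div_iff hcard0 (by norm_num : (15:ℝ) ≠ 0)]
      linear_combination hR
    rw [h2, h4]
    unfold Q4
    have h2n1 : (2*(n:ℝ)+1) ≠ 0 := by positivity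
    push_cast
    field_simp
    ring
  · have h1 : Filter.Tendsto (fun m:ℕ => 1/(m:ℝ)) Filter.atTop (nhds 0) :=
      tendsto_one_div_atTop_nhds_zero_nat
    have hg : Filter.Tendsto
        (fun m:ℕ => (30 - 3*(1/(m:ℝ)) - 12*((1/(m:ℝ))*(1/(m:ℝ))))/(10 + 5*(1/(m:ℝ))))
        Filter.atTop (nhds ((30 - 3*(0:ℝ) - 12*(0*0))/(10 + 5*0))) := by
      apply Filter.Tendsto.div
      · exact (tendsto_const_nhds.sub (h1.const_mul 3)).sub ((h1.mul h1).const_mul 12)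
      · exact tendsto_const_nhds.add (h1.const_mul 5)
      · norm_num
    have hg3 : ((30 - 3*(0:ℝ) - 12*(0*0))/(10 + 5*0)) = 3 := by norm_num
    rw [hg3] at hg
    apply Filter.Tendsto.congr' _ hg
    filter_upwards [Filter.eventually_ge_atTop 1] with m hm
    have hm0 : (m:ℝ) ≠ 0 := Nat.cast_ne_zero.2 (by omega)
    have h2m : 2*(m:ℝ)+1 ≠ 0 := by positivity
    field_simp
    ring
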